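/- Let b = (b₁,…,b_N) ∈ (K^×)^N satisfy: whenever b_i ≠ b_j, the ratio b_i/b_j is not an integer power of q. Let W_J = {w ∈ S_N : b_{w(i)} = b_i for all i} be the stabilizer of b in S_N, and let K_b denote the one-dimensional K[Y^{±}]-module on which Y_i acts by b_i. Then the endomorphism algebra End_D(D ⊗_{K[Y^{±}]} K_b) is isomorphic as a K-algebra to K[W_J]^op. -/

import Mathlib

/-!
Statement 13: Let `K` be a field of characteristic zero, `q ∈ K^×` not a root
of unity, and `D = D_q(H) # S_N` the smash product of the quantum torus with
the symmetric group.  Let `b ∈ (K^×)^N` be such that whenever `b_i ≠ b_j`, the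
ratio `b_i/b_j` is not an integer power of `q`.  Let `W_J ⊆ S_N` be the
stabilizer of `b` and `K_b` the one-dimensional `K[Y^{±}]`-module on which
`Y_i` acts by `b_i`.  Then `End_D(D ⊗_{K[Y^{±}]} K_b)` is isomorphic as a
`K`-algebra to `K[W_J]^op`.

The induced module `D ⊗_{K[Y^{±}]} K_b` is realized as the quotient of `D` by
the left ideal generated by the elements `Y_i − b_i` and `Y_i^{-1} − b_i^{-1}`.
-/

noncomputable section

/-- Generators of the smash product `D = D_q(H) # S_N`. -/
inductive SGen (N : ℕ) : Type
  | X : Fin N → SGen N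
  | Xinv : Fin N → SGen N
  | Y : Fin N → SGen N
  | Yinv : Fin N → SGen N
  | S : Equiv.Perm (Fin N) → SGen N

/-- The generator embedding into the free algebra. -/
def sg (K : Type) [Field K] {N : ℕ} (g : SGen N) : FreeAlgebra K (SGen N) :=
  FreeAlgebra.ι K g

/-- The defining relations of the smash product `D_q(H) # S_N`. -/
inductive SRel (K : Type) [Field K] (N : ℕ) (q : Kˣ) :
    FreeAlgebra K (SGen N) → FreeAlgebra K (SGen N) → Prop
  | XX (i j : Fin N) :
      SRel K N q (sg K (.X i) * sg K (.X j)) (sg K (.X j) * sg K (.X i))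
  | XXinv (i : Fin N) : SRel K N q (sg K (.X i) * sg K (.Xinv i)) 1
  | XinvX (i : Fin N) : SRel K N q (sg K (.Xinv i) * sg K (.X i)) 1
  | YY (i j : Fin N) :
      SRel K N q (sg K (.Y i) * sg K (.Y j)) (sg K (.Y j) * sg K (.Y i))
  | YYinv (i : Fin N) : SRel K N q (sg K (.Y i) * sg K (.Yinv i)) 1
  | YinvY (i : Fin N) : SRel K N q (sg K (.Yinv i) * sg K (.Y i)) 1
  | YXne (i j : Fin N) (h : i ≠ j) :
      SRel K N q (sg K (.Y i) * sg K (.X j)) (sg K (.X j) * sg K (.Y i))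
  | YXeq (i : Fin N) :
      SRel K N q (sg K (.Y i) * sg K (.X i)) ((q : K) • (sg K (.X i) * sg K (.Y i)))
  | Smul (w w' : Equiv.Perm (Fin N)) :
      SRel K N q (sg K (.S w) * sg K (.S w')) (sg K (.S (w * w')))
  | Sone : SRel K N q (sg K (.S 1)) 1
  | SX (w : Equiv.Perm (Fin N)) (i : Fin N) :
      SRel K N q (sg K (.S w) * sg K (.X i)) (sg K (.X (w i)) * sg K (.S w))
  | SY (w : Equiv.Perm (Fin N)) (i : Fin N) :
      SRel K N q (sg K (.S w) * sg K (.Y i)) (sg K (.Y (w i)) * sg K (.S w))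

/-- The smash product `D = D_q(H) # S_N`, presented by generators and relations. -/
abbrev SmashD (K : Type) [Field K] (N : ℕ) (q : Kˣ) := RingQuot (SRel K N q)

/-- The element `Y_i` of `D`. -/
def Ye (K : Type) [Field K] {N : ℕ} (q : Kˣ) (i : Fin N) : SmashD K N q :=
  RingQuot.mkAlgHom K (SRel K N q) (sg K (.Y i))

/-- The element `Y_i^{-1}` of `D`. -/
def YeInv (K : Type) [Field K] {N : ℕ} (q : Kˣ) (i : Fin N) : SmashD K N q :=
  RingQuot.mkAlgHom K (SRel K N q) (sg K (.Yinv i))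

/-- The stabilizer `W_J = {w ∈ S_N : b_{w(i)} = b_i for all i}` of `b` in `S_N`. -/
def permStab (K : Type) [Field K] (N : ℕ) (b : Fin N → Kˣ) :
    Subgroup (Equiv.Perm (Fin N)) where
  carrier := {w | ∀ i, b (w i) = b i}
  one_mem' := fun i => rfl
  mul_mem' := by
    intro w w' hw hw' i
    rw [Equiv.Perm.mul_apply, hw, hw']
  inv_mem' := by
    intro w hw i
    have := hw (w⁻¹ i)
    rw [show w (w⁻¹ i) = i from by simp] at this
    exact this.symm

/-- The left ideal of `D` presenting the induced module `D ⊗_{K[Y^{±}]} K_b`,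
generated by the elements `Y_i − b_i` and `Y_i^{-1} − b_i^{-1}`. -/
def charIdeal (K : Type) [Field K] (N : ℕ) (q : Kˣ) (b : Fin N → Kˣ) :
    Submodule (SmashD K N q) (SmashD K N q) :=
  Submodule.span (SmashD K N q)
    ((Set.range fun i : Fin N => Ye K q i - algebraMap K (SmashD K N q) (b i : K)) ∪
      (Set.range fun i : Fin N => YeInv K q i - algebraMap K (SmashD K N q) ((b i)⁻¹ : Kˣ)))

namespace S13

variable {K : Type} [Field K] {N : ℕ} {q : Kˣ}

def mkD (K : Type) [Field K] {N : ℕ} (q : Kˣ) :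
    FreeAlgebra K (SGen N) →ₐ[K] SmashD K N q := RingQuot.mkAlgHom K (SRel K N q)

def Xe (K : Type) [Field K] {N : ℕ} (q : Kˣ) (i : Fin N) : SmashD K N q :=
  mkD K q (sg K (.X i))
def XeInv (K : Type) [Field K] {N : ℕ} (q : Kˣ) (i : Fin N) : SmashD K N q :=
  mkD K q (sg K (.Xinv i))
def Se (K : Type) [Field K] {N : ℕ} (q : Kˣ) (w : Equiv.Perm (Fin N)) : SmashD K N q :=
  mkD K q (sg K (.S w))

lemma Ye_eq (i : Fin N) : Ye K q i = mkD K q (sg K (.Y i)) := rfl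
lemma YeInv_eq (i : Fin N) : YeInv K q i = mkD K q (sg K (.Yinv i)) := rfl

lemma relD {x y : FreeAlgebra K (SGen N)} (h : SRel K N q x y) :
    mkD K q x = mkD K q y := RingQuot.mkAlgHom_rel K h

lemma rXX (i j : Fin N) : Xe K q i * Xe K q j = Xe K q j * Xe K q i := by
  simpa [Xe, map_mul] using relD (SRel.XX (q := q) i j)
lemma rXXinv (i : Fin N) : Xe K q i * XeInv K q i = 1 := by
  simpa [Xe, XeInv, map_mul] using relD (SRel.XXinv (q := q) i)
lemma rXinvX (i : Fin N) : XeInv K q i * Xe K q i = 1 := by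
  simpa [Xe, XeInv, map_mul] using relD (SRel.XinvX (q := q) i)
lemma rYYinv (i : Fin N) : Ye K q i * YeInv K q i = 1 := by
  simpa [Ye_eq, YeInv_eq, map_mul] using relD (SRel.YYinv (q := q) i)
lemma rYinvY (i : Fin N) : YeInv K q i * Ye K q i = 1 := by
  simpa [Ye_eq, YeInv_eq, map_mul] using relD (SRel.YinvY (q := q) i)
lemma rYXne {i j : Fin N} (h : i ≠ j) :
    Ye K q i * Xe K q j = Xe K q j * Ye K q i := by
  simpa [Ye_eq, Xe, map_mul] using relD (SRel.YXne (q := q) i j h)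
lemma rYXeq (i : Fin N) :
    Ye K q i * Xe K q i = (q : K) • (Xe K q i * Ye K q i) := by
  simpa [Ye_eq, Xe, map_mul, map_smul] using relD (SRel.YXeq (q := q) i)
lemma rSmul (w w' : Equiv.Perm (Fin N)) :
    Se K q w * Se K q w' = Se K q (w * w') := by
  simpa [Se, map_mul] using relD (SRel.Smul (q := q) w w')
lemma rSone : Se K q (1 : Equiv.Perm (Fin N)) = 1 := by
  simpa [Se] using relD (SRel.Sone (q := q) (N := N))
lemma rSX (w : Equiv.Perm (Fin N)) (i : Fin N) :
    Se K q w * Xe K q i = Xe K q (w i) * Se K q w := by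
  simpa [Se, Xe, map_mul] using relD (SRel.SX (q := q) w i)
lemma rSY (w : Equiv.Perm (Fin N)) (i : Fin N) :
    Se K q w * Ye K q i = Ye K q (w i) * Se K q w := by
  simpa [Se, Ye_eq, map_mul] using relD (SRel.SY (q := q) w i)

/-- `X_i` as a unit. -/
def Xu (K : Type) [Field K] {N : ℕ} (q : Kˣ) (i : Fin N) : (SmashD K N q)ˣ :=
  ⟨Xe K q i, XeInv K q i, rXXinv i, rXinvX i⟩
/-- `s_w` as a unit. -/
def Su (K : Type) [Field K] {N : ℕ} (q : Kˣ) (w : Equiv.Perm (Fin N)) : (SmashD K N q)ˣ :=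
  ⟨Se K q w, Se K q w⁻¹, by rw [rSmul, mul_inv_cancel, rSone], by rw [rSmul, inv_mul_cancel, rSone]⟩

@[simp] lemma Xu_val (i : Fin N) : ((Xu K q i : (SmashD K N q)ˣ) : SmashD K N q) = Xe K q i := rfl
@[simp] lemma Xu_inv_val (i : Fin N) :
    (((Xu K q i)⁻¹ : (SmashD K N q)ˣ) : SmashD K N q) = XeInv K q i := rfl
@[simp] lemma Su_val (w : Equiv.Perm (Fin N)) :
    ((Su K q w : (SmashD K N q)ˣ) : SmashD K N q) = Se K q w := rfl
@[simp] lemma Su_inv_val (w : Equiv.Perm (Fin N)) :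
    (((Su K q w)⁻¹ : (SmashD K N q)ˣ) : SmashD K N q) = Se K q w⁻¹ := rfl

-- derived commutation with scalars
lemma conj_helper {a ainv y : SmashD K N q} (h1 : ainv * a = 1) (h2 : a * ainv = 1)
    {c : K} (h : y * a = c • (a * y)) : ainv * y = c • (y * ainv) := by
  have := congrArg (fun t => ainv * t * ainv) h
  calc ainv * y = ainv * y * (a * ainv) := by rw [h2, mul_one]
  _ = ainv * (y * a) * ainv := by noncomm_ring
  _ = ainv * (c • (a * y)) * ainv := by rw [h]
  _ = c • (ainv * a * (y * ainv)) := by simp [mul_smul_comm, smul_mul_assoc, mul_assoc]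
  _ = c • (y * ainv) := by rw [h1, one_mul]

lemma smul_flip {x y : SmashD K N q} {c : K} (hc : c ≠ 0) (h : x = c • y) : y = c⁻¹ • x := by
  rw [h, smul_smul, inv_mul_cancel₀ hc, one_smul]

lemma yxinv (i : Fin N) :
    Ye K q i * XeInv K q i = ((q : K))⁻¹ • (XeInv K q i * Ye K q i) := by
  have h := conj_helper (rXinvX (K := K) (q := q) i) (rXXinv i) (rYXeq i)
  exact smul_flip (c := (q : K)) (Units.ne_zero q) h

lemma yinvx (i : Fin N) :
    YeInv K q i * Xe K q i = ((q : K))⁻¹ • (Xe K q i * YeInv K q i) := by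
  have h0 : Xe K q i * Ye K q i = ((q : K))⁻¹ • (Ye K q i * Xe K q i) :=
    smul_flip (c := (q : K)) (Units.ne_zero q) (rYXeq i)
  exact conj_helper (rYinvY i) (rYYinv i) h0

lemma yinvxinv (i : Fin N) :
    YeInv K q i * XeInv K q i = (q : K) • (XeInv K q i * YeInv K q i) := by
  have h := conj_helper (rXinvX (K := K) (q := q) i) (rXXinv i) (rYXeq i)
  -- h : XeInv * Ye = q • (Ye * XeInv)
  exact conj_helper (rYinvY i) (rYYinv i) h

lemma yxinv_ne {i j : Fin N} (h : i ≠ j) :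
    Ye K q i * XeInv K q j = XeInv K q j * Ye K q i := by
  have h0 : Ye K q i * Xe K q j = (1 : K) • (Xe K q j * Ye K q i) := by
    simpa using rYXne h
  have := conj_helper (rXinvX j) (rXXinv j) h0
  simpa using this.symm

lemma yinvx_ne {i j : Fin N} (h : i ≠ j) :
    YeInv K q i * Xe K q j = Xe K q j * YeInv K q i := by
  have h0 : Xe K q j * Ye K q i = (1 : K) • (Ye K q i * Xe K q j) := by
    simpa using (rYXne h).symm
  have := conj_helper (rYinvY i) (rYYinv i) h0
  simpa using this

lemma yinvxinv_ne {i j : Fin N} (h : i ≠ j) :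
    YeInv K q i * XeInv K q j = XeInv K q j * YeInv K q i := by
  have h0 : XeInv K q j * Ye K q i = (1 : K) • (Ye K q i * XeInv K q j) := by
    simpa using (yxinv_ne h).symm
  have := conj_helper (rYinvY i) (rYYinv i) h0
  simpa using this

end S13

namespace S13

section Xm
variable (K : Type) [Field K] {N : ℕ} (q : Kˣ)

lemma commXu (i j : Fin N) : Commute (Xu K q i) (Xu K q j) :=
  Units.ext (by simpa using rXX (K := K) (q := q) i j)

/-- The monomial `X^a` for `a : Fin N → ℤ`, as a unit of `D`. -/
def Xm (a : Fin N → ℤ) : (SmashD K N q)ˣ :=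
  MonoidHom.noncommPiCoprod (fun i : Fin N => zpowersHom (SmashD K N q)ˣ (Xu K q i))
    (fun i j hij x y => by
      simpa using ((commXu K q i j).zpow_zpow x.toAdd y.toAdd))
    (fun i => Multiplicative.ofAdd (a i))

lemma Xm_add (a a' : Fin N → ℤ) : Xm K q (a + a') = Xm K q a * Xm K q a' := by
  unfold Xm
  rw [← map_mul]
  rfl

lemma Xm_zero : Xm K q (0 : Fin N → ℤ) = 1 := by
  unfold Xm
  rw [show (fun i : Fin N => Multiplicative.ofAdd ((0 : Fin N → ℤ) i)) = 1 from rfl, map_one]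

lemma Xm_single (j : Fin N) (z : ℤ) : Xm K q (Pi.single j z) = Xu K q j ^ z := by
  have h : (fun i : Fin N => Multiplicative.ofAdd ((Pi.single j z : Fin N → ℤ) i))
      = (Pi.mulSingle j (Multiplicative.ofAdd z) : ∀ _ : Fin N, Multiplicative ℤ) := by
    funext i
    by_cases h : i = j
    · subst h; simp
    · simp [Pi.single_eq_of_ne h, Pi.mulSingle_eq_of_ne h, ofAdd_zero]
  unfold Xm
  rw [h]
  exact MonoidHom.noncommPiCoprod_mulSingle _ j _

end Xm

variable {K : Type} [Field K] {N : ℕ} {q : Kˣ}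

lemma pi_int_induction {P : (Fin N → ℤ) → Prop} (h0 : P 0)
    (hstep : ∀ (a : Fin N → ℤ) (j : Fin N) (z : ℤ), P a → P (a + Pi.single j z)) :
    ∀ a, P a := by
  intro a
  have key : ∀ s : Finset (Fin N), P (fun i => if i ∈ s then a i else 0) := by
    intro s
    induction s using Finset.induction with
    | empty => convert h0 using 1; funext i; simp
    | @insert j s hj ih =>
        have : (fun i => if i ∈ insert j s then a i else 0)
            = (fun i => if i ∈ s then a i else 0) + Pi.single j (a j) := by
          funext i
          by_cases hij : i = j
          · subst hij; simp [hj]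
          · simp [hij, Pi.single_eq_of_ne hij]
        rw [this]
        exact hstep _ j (a j) ih
  have := key Finset.univ
  simpa using this

lemma y_xu_eq (i : Fin N) (z : ℤ) :
    Ye K q i * ((Xu K q i ^ z : (SmashD K N q)ˣ) : SmashD K N q)
      = ((q ^ z : Kˣ) : K) • (((Xu K q i ^ z : (SmashD K N q)ˣ) : SmashD K N q) * Ye K q i) := by
  induction z using Int.induction_on with
  | zero => simp
  | succ k ih =>
      have hz : (Xu K q i) ^ ((k : ℤ) + 1) = (Xu K q i) ^ (k : ℤ) * Xu K q i :=
        zpow_add_one _ _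
      rw [hz, Units.val_mul, Xu_val, ← mul_assoc, ih]
      rw [smul_mul_assoc, mul_assoc, rYXeq, mul_smul_comm, smul_smul]
      rw [show ((q ^ ((k : ℤ) + 1) : Kˣ) : K) = ((q ^ (k : ℤ) : Kˣ) : K) * (q : K) by
        rw [zpow_add_one]; push_cast; ring]
      noncomm_ring
  | pred k ih =>
      have hz : (Xu K q i) ^ (-(k : ℤ) - 1) = (Xu K q i) ^ (-(k : ℤ)) * (Xu K q i)⁻¹ :=
        zpow_sub_one _ _
      rw [hz, Units.val_mul, Xu_inv_val, ← mul_assoc, ih]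
      rw [smul_mul_assoc, mul_assoc, yxinv, mul_smul_comm, smul_smul]
      rw [show ((q ^ (-(k : ℤ) - 1) : Kˣ) : K) = ((q ^ (-(k : ℤ)) : Kˣ) : K) * ((q : K))⁻¹ by
        rw [zpow_sub_one]; push_cast; ring]
      noncomm_ring

lemma y_xu_ne {i j : Fin N} (h : i ≠ j) (z : ℤ) :
    Commute (Ye K q i) (((Xu K q j ^ z : (SmashD K N q)ˣ) : SmashD K N q)) := by
  have c1 : Commute (Ye K q i) ((Xu K q j : (SmashD K N q)ˣ) : SmashD K N q) := rYXne h
  exact c1.units_zpow_right z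

lemma yinv_xu_eq (i : Fin N) (z : ℤ) :
    YeInv K q i * ((Xu K q i ^ z : (SmashD K N q)ˣ) : SmashD K N q)
      = ((q ^ (-z) : Kˣ) : K) • (((Xu K q i ^ z : (SmashD K N q)ˣ) : SmashD K N q) * YeInv K q i) := by
  induction z using Int.induction_on with
  | zero => simp
  | succ k ih =>
      have hz : (Xu K q i) ^ ((k : ℤ) + 1) = (Xu K q i) ^ (k : ℤ) * Xu K q i :=
        zpow_add_one _ _
      rw [hz, Units.val_mul, Xu_val, ← mul_assoc, ih]
      rw [smul_mul_assoc, mul_assoc, yinvx, mul_smul_comm, smul_smul]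
      rw [show ((q ^ (-((k : ℤ) + 1)) : Kˣ) : K) = ((q ^ (-(k : ℤ)) : Kˣ) : K) * ((q : K))⁻¹ by
        rw [show -((k : ℤ) + 1) = -(k : ℤ) - 1 by ring, zpow_sub_one]; push_cast; ring]
      noncomm_ring
  | pred k ih =>
      have hz : (Xu K q i) ^ (-(k : ℤ) - 1) = (Xu K q i) ^ (-(k : ℤ)) * (Xu K q i)⁻¹ :=
        zpow_sub_one _ _
      rw [hz, Units.val_mul, Xu_inv_val, ← mul_assoc, ih]
      rw [smul_mul_assoc, mul_assoc, yinvxinv, mul_smul_comm, smul_smul]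
      rw [show ((q ^ (-(-(k : ℤ) - 1)) : Kˣ) : K) = ((q ^ (-(-(k : ℤ))) : Kˣ) : K) * (q : K) by
        rw [show -(-(k : ℤ) - 1) = -(-(k : ℤ)) + 1 by ring, zpow_add_one]; push_cast; ring]
      noncomm_ring

lemma yinv_xu_ne {i j : Fin N} (h : i ≠ j) (z : ℤ) :
    Commute (YeInv K q i) (((Xu K q j ^ z : (SmashD K N q)ˣ) : SmashD K N q)) := by
  have c1 : Commute (YeInv K q i) ((Xu K q j : (SmashD K N q)ˣ) : SmashD K N q) := yinvx_ne h
  exact c1.units_zpow_right z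

lemma y_Xm (i : Fin N) (a : Fin N → ℤ) :
    Ye K q i * ((Xm K q a : (SmashD K N q)ˣ) : SmashD K N q)
      = ((q ^ (a i) : Kˣ) : K) • (((Xm K q a : (SmashD K N q)ˣ) : SmashD K N q) * Ye K q i) := by
  induction a using pi_int_induction with
  | h0 => simp [Xm_zero]
  | hstep a j z ih =>
      rw [Xm_add, Xm_single, Units.val_mul, ← mul_assoc, ih, smul_mul_assoc, mul_assoc]
      by_cases hji : j = i
      · subst hji
        rw [y_xu_eq, mul_smul_comm, smul_smul]
        simp only [Pi.add_apply, Pi.single_eq_same]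
        rw [zpow_add, Units.val_mul, mul_assoc]
      · have hij : i ≠ j := fun h => hji h.symm
        simp only [Pi.add_apply, Pi.single_eq_of_ne hij, add_zero]
        rw [(y_xu_ne hij z).eq, mul_assoc]

lemma yinv_Xm (i : Fin N) (a : Fin N → ℤ) :
    YeInv K q i * ((Xm K q a : (SmashD K N q)ˣ) : SmashD K N q)
      = ((q ^ (-(a i)) : Kˣ) : K) • (((Xm K q a : (SmashD K N q)ˣ) : SmashD K N q) * YeInv K q i) := by
  induction a using pi_int_induction with
  | h0 => simp [Xm_zero]
  | hstep a j z ih =>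
      rw [Xm_add, Xm_single, Units.val_mul, ← mul_assoc, ih, smul_mul_assoc, mul_assoc]
      by_cases hji : j = i
      · subst hji
        rw [yinv_xu_eq, mul_smul_comm, smul_smul]
        simp only [Pi.add_apply, Pi.single_eq_same, neg_add]
        rw [zpow_add, Units.val_mul, mul_assoc]
      · have hij : i ≠ j := fun h => hji h.symm
        simp only [Pi.add_apply, Pi.single_eq_of_ne hij, add_zero]
        rw [(yinv_xu_ne hij z).eq, mul_assoc]

lemma s_xu (u : Equiv.Perm (Fin N)) (j : Fin N) (z : ℤ) :
    Se K q u * ((Xu K q j ^ z : (SmashD K N q)ˣ) : SmashD K N q)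
      = ((Xu K q (u j) ^ z : (SmashD K N q)ˣ) : SmashD K N q) * Se K q u := by
  have hu : Su K q u * Xu K q j * (Su K q u)⁻¹ = Xu K q (u j) := by
    apply Units.ext
    rw [Units.val_mul, Units.val_mul, Su_val, Su_inv_val, Xu_val, rSX, mul_assoc, rSmul]
    rw [mul_inv_cancel, rSone, mul_one, Xu_val]
  have h2 : Su K q u * (Xu K q j) ^ z * (Su K q u)⁻¹ = (Xu K q (u j)) ^ z := by
    have := map_zpow (MulAut.conj (Su K q u)) (Xu K q j) z
    rw [MulAut.conj_apply, MulAut.conj_apply, hu] at this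
    exact this
  have h3 : Su K q u * (Xu K q j) ^ z = (Xu K q (u j)) ^ z * Su K q u := by
    rw [← h2, mul_assoc, mul_assoc, inv_mul_cancel, mul_one]
  have := congrArg (Units.val) h3
  simpa using this

lemma s_Xm (u : Equiv.Perm (Fin N)) (a : Fin N → ℤ) :
    Se K q u * ((Xm K q a : (SmashD K N q)ˣ) : SmashD K N q)
      = ((Xm K q (fun k => a (u⁻¹ k)) : (SmashD K N q)ˣ) : SmashD K N q) * Se K q u := by
  induction a using pi_int_induction with
  | h0 =>
      rw [Xm_zero, show (fun k => (0 : Fin N → ℤ) (u⁻¹ k)) = (0 : Fin N → ℤ) from rfl, Xm_zero]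
      simp
  | hstep a j z ih =>
      have hidx : (fun k => ((a + Pi.single j z : Fin N → ℤ)) (u⁻¹ k))
          = (fun k => a (u⁻¹ k)) + (Pi.single (u j) z : Fin N → ℤ) := by
        funext k
        by_cases hk : k = u j
        · subst hk; simp
        · have : u.symm k ≠ j := by
            intro h; apply hk; rw [← h]; simp
          simp [Pi.single_eq_of_ne this, Pi.single_eq_of_ne hk]
      rw [hidx, Xm_add, Xm_add, Xm_single, Xm_single, Units.val_mul, Units.val_mul, ← mul_assoc,
        ih, mul_assoc, s_xu, ← mul_assoc]

end S13

namespace S13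

/-- Index type for the basis `X^a s_w` of the induced module. -/
abbrev PIdx (N : ℕ) := (Fin N → ℤ) × Equiv.Perm (Fin N)

/-- The concrete model of the induced module. -/
abbrev MM (K : Type) [Field K] (N : ℕ) := PIdx N →₀ K

section Model

variable (K : Type) [Field K] {N : ℕ} (q : Kˣ) (b : Fin N → Kˣ)

/-- The weight of the basis vector `X^a s_w` under `Y_i`. -/
def wt (p : PIdx N) (i : Fin N) : Kˣ := q ^ (p.1 i) * b (p.2⁻¹ i)

def TX (i : Fin N) : Module.End K (MM K N) :=
  Finsupp.lmapDomain K K (fun p : PIdx N => (p.1 + (Pi.single i 1 : Fin N → ℤ), p.2))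

def TXinv (i : Fin N) : Module.End K (MM K N) :=
  Finsupp.lmapDomain K K (fun p : PIdx N => (p.1 + (Pi.single i (-1) : Fin N → ℤ), p.2))

def TY (i : Fin N) : Module.End K (MM K N) :=
  Finsupp.lsum K fun p : PIdx N => ((wt K q b p i : K)) • Finsupp.lsingle p

def TYinv (i : Fin N) : Module.End K (MM K N) :=
  Finsupp.lsum K fun p : PIdx N => ((((wt K q b p i)⁻¹ : Kˣ)) : K) • Finsupp.lsingle p

def TS (u : Equiv.Perm (Fin N)) : Module.End K (MM K N) :=
  Finsupp.lmapDomain K K (fun p : PIdx N => ((fun j => p.1 (u⁻¹ j)), u * p.2))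

@[simp] lemma TX_single (i : Fin N) (p : PIdx N) (k : K) :
    TX K i (Finsupp.single p k)
      = Finsupp.single (p.1 + (Pi.single i 1 : Fin N → ℤ), p.2) k := by
  simp [TX, Finsupp.mapDomain_single]

@[simp] lemma TXinv_single (i : Fin N) (p : PIdx N) (k : K) :
    TXinv K i (Finsupp.single p k)
      = Finsupp.single (p.1 + (Pi.single i (-1) : Fin N → ℤ), p.2) k := by
  simp [TXinv, Finsupp.mapDomain_single]

@[simp] lemma TY_single (i : Fin N) (p : PIdx N) (k : K) :
    TY K q b i (Finsupp.single p k) = (wt K q b p i : K) • Finsupp.single p k := by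
  simp [TY]

@[simp] lemma TYinv_single (i : Fin N) (p : PIdx N) (k : K) :
    TYinv K q b i (Finsupp.single p k)
      = ((((wt K q b p i)⁻¹ : Kˣ)) : K) • Finsupp.single p k := by
  simp [TYinv]

@[simp] lemma TS_single (u : Equiv.Perm (Fin N)) (p : PIdx N) (k : K) :
    TS K u (Finsupp.single p k)
      = Finsupp.single ((fun j => p.1 (u⁻¹ j)), u * p.2) k := by
  simp [TS, Finsupp.mapDomain_single]

/-- Generator images in `End K MM`. -/
def Tg : SGen N → Module.End K (MM K N)
  | .X i => TX K i
  | .Xinv i => TXinv K i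
  | .Y i => TY K q b i
  | .Yinv i => TYinv K q b i
  | .S u => TS K u

def Ff : FreeAlgebra K (SGen N) →ₐ[K] Module.End K (MM K N) :=
  FreeAlgebra.lift K (Tg K q b)

lemma end_ext {f g : Module.End K (MM K N)}
    (h : ∀ p : PIdx N, f (Finsupp.single p 1) = g (Finsupp.single p 1)) : f = g := by
  apply Finsupp.lhom_ext
  intro a k
  have hk : (Finsupp.single a k : MM K N) = k • Finsupp.single a 1 := by
    simp [Finsupp.smul_single]
  rw [hk, map_smul, map_smul, h]

@[simp] lemma Ff_sg (g : SGen N) : Ff K q b (sg K g) = Tg K q b g := by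
  simp [Ff, sg, FreeAlgebra.lift_ι_apply]

lemma wt_shift (p : PIdx N) (i j : Fin N) (z : ℤ) :
    wt K q b ((p.1 + (Pi.single j z : Fin N → ℤ), p.2)) i
      = q ^ ((Pi.single j z : Fin N → ℤ) i) * wt K q b p i := by
  unfold wt
  simp only [Pi.add_apply]
  rw [add_comm, zpow_add, mul_assoc]

lemma wt_perm (p : PIdx N) (u : Equiv.Perm (Fin N)) (i : Fin N) :
    wt K q b (((fun j => p.1 (u⁻¹ j)), u * p.2)) (u i) = wt K q b p i := by
  unfold wt
  simp [mul_inv_rev, Equiv.Perm.mul_apply]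

lemma Frel : ∀ ⦃x y : FreeAlgebra K (SGen N)⦄, SRel K N q x y → Ff K q b x = Ff K q b y := by
  intro x y h
  cases h with
  | XX i j =>
      rw [map_mul, map_mul]
      apply end_ext; intro p
      simp only [Ff_sg, Tg, Module.End.mul_apply, TX_single]
      rw [add_right_comm]
  | XXinv i =>
      rw [map_mul, map_one]
      apply end_ext; intro p
      simp [Tg, Module.End.mul_apply, add_assoc,
        show (Pi.single i (-1) : Fin N → ℤ) + Pi.single i 1 = 0 by
          rw [← Pi.single_add]; norm_num]
  | XinvX i =>
      rw [map_mul, map_one]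
      apply end_ext; intro p
      simp [Tg, Module.End.mul_apply, add_assoc,
        show (Pi.single i 1 : Fin N → ℤ) + Pi.single i (-1) = 0 by
          rw [← Pi.single_add]; norm_num]
  | YY i j =>
      rw [map_mul, map_mul]
      apply end_ext; intro p
      simp only [Ff_sg, Tg, Module.End.mul_apply, TY_single, Finsupp.smul_single, smul_eq_mul]
      ring_nf
  | YYinv i =>
      rw [map_mul, map_one]
      apply end_ext; intro p
      simp [Tg, Module.End.mul_apply, Finsupp.smul_single, smul_eq_mul]
  | YinvY i =>
      rw [map_mul, map_one]
      apply end_ext; intro p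
      simp [Tg, Module.End.mul_apply, Finsupp.smul_single, smul_eq_mul]
  | YXne i j hij =>
      rw [map_mul, map_mul]
      apply end_ext; intro p
      simp only [Ff_sg, Tg, Module.End.mul_apply, TX_single, TY_single, Finsupp.smul_single,
        smul_eq_mul, map_smul]
      rw [wt_shift]
      simp [Pi.single_eq_of_ne hij]
  | YXeq i =>
      rw [map_mul, map_smul, map_mul]
      apply end_ext; intro p
      simp only [Ff_sg, Tg, Module.End.mul_apply, TX_single, TY_single, Finsupp.smul_single,
        smul_eq_mul, LinearMap.smul_apply, map_smul]
      rw [wt_shift]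
      simp only [Pi.single_eq_same, zpow_one, Units.val_mul, Finsupp.smul_single, smul_eq_mul]
      ring_nf
  | Smul u u' =>
      rw [map_mul]
      apply end_ext; intro p
      simp only [Ff_sg, Tg, Module.End.mul_apply, TS_single]
      have h1 : (fun j => p.1 ((u * u')⁻¹ j)) = (fun j => (fun j' => p.1 (u'⁻¹ j')) (u⁻¹ j)) := by
        funext j; simp [mul_inv_rev, Equiv.Perm.mul_apply]
      rw [h1, mul_assoc]
  | Sone =>
      rw [map_one]
      apply end_ext; intro p
      simp [Tg, Module.End.mul_apply]
  | SX u i =>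
      rw [map_mul, map_mul]
      apply end_ext; intro p
      simp only [Ff_sg, Tg, Module.End.mul_apply, TS_single, TX_single]
      have h1 : (fun j => (p.1 + (Pi.single i 1 : Fin N → ℤ)) (u⁻¹ j))
          = (fun j => p.1 (u⁻¹ j)) + (Pi.single (u i) 1 : Fin N → ℤ) := by
        funext k
        by_cases hk : k = u i
        · subst hk; simp
        · have : u.symm k ≠ i := by intro h; apply hk; rw [← h]; simp
          simp [Pi.single_eq_of_ne this, Pi.single_eq_of_ne hk]
      rw [h1]
  | SY u i =>
      rw [map_mul, map_mul]
      apply end_ext; intro p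
      simp only [Ff_sg, Tg, Module.End.mul_apply, TS_single, TY_single, map_smul,
        Finsupp.smul_single, smul_eq_mul]
      rw [show ((fun j => p.1 (u⁻¹ j)), u * p.2) = (((fun j => p.1 (u⁻¹ j)), u * p.2) : PIdx N)
        from rfl]
      rw [wt_perm]

/-- The representation of `D` on `MM`. -/
def φr : SmashD K N q →ₐ[K] Module.End K (MM K N) :=
  RingQuot.liftAlgHom K ⟨Ff K q b, fun _ _ h => Frel K q b h⟩

lemma φr_mk (x : FreeAlgebra K (SGen N)) : φr K q b (mkD K q x) = Ff K q b x := by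
  simp [φr, mkD, RingQuot.liftAlgHom_mkAlgHom_apply]

@[simp] lemma φr_Xe (i : Fin N) : φr K q b (Xe K q i) = TX K i := by
  rw [Xe, φr_mk]; simp [Tg]
@[simp] lemma φr_XeInv (i : Fin N) : φr K q b (XeInv K q i) = TXinv K i := by
  rw [XeInv, φr_mk]; simp [Tg]
@[simp] lemma φr_Ye (i : Fin N) : φr K q b (Ye K q i) = TY K q b i := by
  rw [Ye_eq, φr_mk]; simp [Tg]
@[simp] lemma φr_YeInv (i : Fin N) : φr K q b (YeInv K q i) = TYinv K q b i := by
  rw [YeInv_eq, φr_mk]; simp [Tg]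
@[simp] lemma φr_Se (u : Equiv.Perm (Fin N)) : φr K q b (Se K q u) = TS K u := by
  rw [Se, φr_mk]; simp [Tg]

/-- The cyclic vector. -/
def e0 : MM K N := Finsupp.single ((0 : Fin N → ℤ), (1 : Equiv.Perm (Fin N))) 1

/-- Evaluation of the representation at the cyclic vector. -/
def ψm : SmashD K N q →ₗ[K] MM K N where
  toFun d := φr K q b d (e0 K)
  map_add' x y := by
    show φr K q b (x + y) (e0 K) = φr K q b x (e0 K) + φr K q b y (e0 K)
    rw [map_add]; rfl
  map_smul' c x := by
    show φr K q b (c • x) (e0 K) = (RingHom.id K) c • (φr K q b x (e0 K))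
    rw [map_smul, RingHom.id_apply]; rfl

lemma ψm_apply (d : SmashD K N q) : ψm K q b d = φr K q b d (e0 K) := rfl

/-- The basis monomial `X^a s_w` in `D`. -/
def mono (p : PIdx N) : SmashD K N q :=
  ((Xm K q p.1 : (SmashD K N q)ˣ) : SmashD K N q) * Se K q p.2

/-- The linear section sending a basis vector to the corresponding monomial. -/
def θ0 : MM K N →ₗ[K] SmashD K N q :=
  Finsupp.lsum K fun p : PIdx N => LinearMap.toSpanSingleton K (SmashD K N q) (mono K q p)

@[simp] lemma θ0_single (p : PIdx N) (k : K) :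
    θ0 K q (Finsupp.single p k) = k • mono K q p := by
  simp [θ0, LinearMap.toSpanSingleton_apply]

end Model

end S13

namespace S13

section Ideal
variable (K : Type) [Field K] {N : ℕ} (q : Kˣ) (b : Fin N → Kˣ)

lemma yS (i : Fin N) (w : Equiv.Perm (Fin N)) :
    Ye K q i * Se K q w = Se K q w * Ye K q (w⁻¹ i) := by
  have h := rSY (K := K) (q := q) w (w⁻¹ i)
  rw [show w (w⁻¹ i) = i from by simp] at h
  exact h.symm

lemma rSYinv (w : Equiv.Perm (Fin N)) (i : Fin N) :
    Se K q w * YeInv K q i = YeInv K q (w i) * Se K q w := by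
  calc Se K q w * YeInv K q i
      = (YeInv K q (w i) * Ye K q (w i)) * Se K q w * YeInv K q i := by
        rw [rYinvY, one_mul]
    _ = YeInv K q (w i) * (Se K q w * Ye K q i) * YeInv K q i := by
        rw [rSY]; noncomm_ring
    _ = YeInv K q (w i) * Se K q w * (Ye K q i * YeInv K q i) := by noncomm_ring
    _ = YeInv K q (w i) * Se K q w := by rw [rYYinv, mul_one]

lemma yinvS (i : Fin N) (w : Equiv.Perm (Fin N)) :
    YeInv K q i * Se K q w = Se K q w * YeInv K q (w⁻¹ i) := by
  have h := rSYinv K q w (w⁻¹ i)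
  rw [show w (w⁻¹ i) = i from by simp] at h
  exact h.symm

lemma gen1_mem (i : Fin N) :
    Ye K q i - algebraMap K (SmashD K N q) (b i : K) ∈ charIdeal K N q b :=
  Submodule.subset_span (Or.inl ⟨i, rfl⟩)

lemma gen2_mem (i : Fin N) :
    YeInv K q i - algebraMap K (SmashD K N q) (((b i)⁻¹ : Kˣ) : K) ∈ charIdeal K N q b :=
  Submodule.subset_span (Or.inr ⟨i, rfl⟩)

lemma smulK_mem {x : SmashD K N q} (hx : x ∈ charIdeal K N q b) (k : K) :
    k • x ∈ charIdeal K N q b := by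
  rw [← algebraMap_smul (SmashD K N q) k x]
  exact Submodule.smul_mem _ _ hx

lemma rY_mem (d : SmashD K N q) (i : Fin N) :
    d * Ye K q i - (b i : K) • d ∈ charIdeal K N q b := by
  have h : d * Ye K q i - (b i : K) • d
      = d • (Ye K q i - algebraMap K (SmashD K N q) (b i : K)) := by
    rw [smul_sub, smul_eq_mul, smul_eq_mul, Algebra.smul_def, Algebra.commutes]
  rw [h]
  exact Submodule.smul_mem _ _ (gen1_mem K q b i)

lemma rYinv_mem (d : SmashD K N q) (i : Fin N) :
    d * YeInv K q i - (((b i)⁻¹ : Kˣ) : K) • d ∈ charIdeal K N q b := by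
  have h : d * YeInv K q i - (((b i)⁻¹ : Kˣ) : K) • d
      = d • (YeInv K q i - algebraMap K (SmashD K N q) (((b i)⁻¹ : Kˣ) : K)) := by
    rw [smul_sub, smul_eq_mul, smul_eq_mul, Algebra.smul_def, Algebra.commutes]
  rw [h]
  exact Submodule.smul_mem _ _ (gen2_mem K q b i)

lemma ψm_I {x : SmashD K N q} (hx : x ∈ charIdeal K N q b) : ψm K q b x = 0 := by
  induction hx using Submodule.span_induction with
  | mem x hx =>
      rcases hx with ⟨i, rfl⟩ | ⟨i, rfl⟩
      · rw [map_sub, ψm_apply, ψm_apply, φr_Ye, AlgHom.commutes]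
        simp [e0, Module.algebraMap_end_apply, wt, Finsupp.smul_single]
      · rw [map_sub, ψm_apply, ψm_apply, φr_YeInv, AlgHom.commutes]
        simp [e0, Module.algebraMap_end_apply, wt, Finsupp.smul_single]
  | zero => exact map_zero _
  | add x y _ _ ihx ihy => rw [map_add, ihx, ihy, add_zero]
  | smul c x _ ih =>
      rw [smul_eq_mul, ψm_apply, map_mul, Module.End.mul_apply, ← ψm_apply, ih, map_zero]

/-- The key compatibility property between `θ0`, the representation, and left
multiplication, modulo the ideal. -/
def Qp (d : SmashD K N q) : Prop :=
  ∀ m : MM K N, θ0 K q (φr K q b d m) - d * θ0 K q m ∈ charIdeal K N q b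

lemma wt_val (a : Fin N → ℤ) (w : Equiv.Perm (Fin N)) (i : Fin N) :
    ((wt K q b (a, w) i : K)) = ((q ^ (a i) : Kˣ) : K) * ((b (w⁻¹ i) : K)) := by
  rw [wt, Units.val_mul]

lemma Qp_single_X (i : Fin N) (a : Fin N → ℤ) (w : Equiv.Perm (Fin N)) (k : K) :
    θ0 K q (TX K i (Finsupp.single ((a, w) : PIdx N) k))
      - Xe K q i * θ0 K q (Finsupp.single ((a, w) : PIdx N) k) ∈ charIdeal K N q b := by
  have hmono : mono K q (((a + (Pi.single i 1 : Fin N → ℤ)), w) : PIdx N)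
      = Xe K q i * mono K q ((a, w) : PIdx N) := by
    unfold mono
    rw [show (a + (Pi.single i 1 : Fin N → ℤ)) = (Pi.single i 1 : Fin N → ℤ) + a
        from add_comm _ _, Xm_add, Xm_single, zpow_one, Units.val_mul, Xu_val, mul_assoc]
  rw [TX_single, θ0_single, θ0_single]
  rw [show ((a, w).1 + (Pi.single i 1 : Fin N → ℤ), (a, w).2)
      = (((a + (Pi.single i 1 : Fin N → ℤ)), w) : PIdx N) from rfl]
  rw [hmono, mul_smul_comm, sub_self]
  exact Submodule.zero_mem _

lemma Qp_single_Xinv (i : Fin N) (a : Fin N → ℤ) (w : Equiv.Perm (Fin N)) (k : K) :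
    θ0 K q (TXinv K i (Finsupp.single ((a, w) : PIdx N) k))
      - XeInv K q i * θ0 K q (Finsupp.single ((a, w) : PIdx N) k) ∈ charIdeal K N q b := by
  have hmono : mono K q (((a + (Pi.single i (-1) : Fin N → ℤ)), w) : PIdx N)
      = XeInv K q i * mono K q ((a, w) : PIdx N) := by
    unfold mono
    rw [show (a + (Pi.single i (-1) : Fin N → ℤ)) = (Pi.single i (-1) : Fin N → ℤ) + a
        from add_comm _ _, Xm_add, Xm_single, zpow_neg_one, Units.val_mul, Xu_inv_val, mul_assoc]
  rw [TXinv_single, θ0_single, θ0_single]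
  rw [show ((a, w).1 + (Pi.single i (-1) : Fin N → ℤ), (a, w).2)
      = (((a + (Pi.single i (-1) : Fin N → ℤ)), w) : PIdx N) from rfl]
  rw [hmono, mul_smul_comm, sub_self]
  exact Submodule.zero_mem _

lemma Qp_single_Y (i : Fin N) (a : Fin N → ℤ) (w : Equiv.Perm (Fin N)) (k : K) :
    θ0 K q (TY K q b i (Finsupp.single ((a, w) : PIdx N) k))
      - Ye K q i * θ0 K q (Finsupp.single ((a, w) : PIdx N) k) ∈ charIdeal K N q b := by
  have hYmono : Ye K q i * mono K q ((a, w) : PIdx N)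
      = ((q ^ (a i) : Kˣ) : K) • (mono K q ((a, w) : PIdx N) * Ye K q (w⁻¹ i)) := by
    unfold mono
    rw [← mul_assoc, y_Xm, smul_mul_assoc, mul_assoc, yS, ← mul_assoc]
  rw [TY_single, map_smul, θ0_single, mul_smul_comm, hYmono, wt_val]
  have hI := smulK_mem K q b (rY_mem K q b (mono K q ((a, w) : PIdx N)) (w⁻¹ i))
    (k * ((q ^ (a i) : Kˣ) : K))
  convert Submodule.neg_mem _ hI using 1
  rw [smul_sub]
  module

lemma Qp_single_Yinv (i : Fin N) (a : Fin N → ℤ) (w : Equiv.Perm (Fin N)) (k : K) :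
    θ0 K q (TYinv K q b i (Finsupp.single ((a, w) : PIdx N) k))
      - YeInv K q i * θ0 K q (Finsupp.single ((a, w) : PIdx N) k) ∈ charIdeal K N q b := by
  have hYmono : YeInv K q i * mono K q ((a, w) : PIdx N)
      = ((q ^ (-(a i)) : Kˣ) : K) • (mono K q ((a, w) : PIdx N) * YeInv K q (w⁻¹ i)) := by
    unfold mono
    rw [← mul_assoc, yinv_Xm, smul_mul_assoc, mul_assoc, yinvS, ← mul_assoc]
  have hwt : (((wt K q b ((a, w) : PIdx N) i)⁻¹ : Kˣ) : K)
      = ((q ^ (-(a i)) : Kˣ) : K) * (((b (w⁻¹ i))⁻¹ : Kˣ) : K) := by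
    rw [wt, mul_inv, zpow_neg, Units.val_mul]
  rw [TYinv_single, map_smul, θ0_single, mul_smul_comm, hYmono, hwt]
  have hI := smulK_mem K q b (rYinv_mem K q b (mono K q ((a, w) : PIdx N)) (w⁻¹ i))
    (k * ((q ^ (-(a i)) : Kˣ) : K))
  convert Submodule.neg_mem _ hI using 1
  rw [smul_sub]
  module

lemma Qp_single_S (u : Equiv.Perm (Fin N)) (a : Fin N → ℤ) (w : Equiv.Perm (Fin N)) (k : K) :
    θ0 K q (TS K u (Finsupp.single ((a, w) : PIdx N) k))
      - Se K q u * θ0 K q (Finsupp.single ((a, w) : PIdx N) k) ∈ charIdeal K N q b := by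
  have hmono : mono K q (((fun j => a (u⁻¹ j)), u * w) : PIdx N)
      = Se K q u * mono K q ((a, w) : PIdx N) := by
    show ((Xm K q (fun j => a (u⁻¹ j)) : (SmashD K N q)ˣ) : SmashD K N q) * Se K q (u * w)
        = Se K q u * (((Xm K q a : (SmashD K N q)ˣ) : SmashD K N q) * Se K q w)
    rw [← rSmul, ← mul_assoc, ← s_Xm, mul_assoc]
  rw [TS_single, θ0_single, θ0_single]
  rw [show (((fun j => ((a, w) : PIdx N).1 (u⁻¹ j)), u * ((a, w) : PIdx N).2) : PIdx N)
      = (((fun j => a (u⁻¹ j)), u * w) : PIdx N) from rfl]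
  rw [hmono, mul_smul_comm, sub_self]
  exact Submodule.zero_mem _

lemma Qp_all (d : SmashD K N q) : Qp K q b d := by
  obtain ⟨x, rfl⟩ := RingQuot.mkAlgHom_surjective K (SRel K N q) d
  show Qp K q b (mkD K q x)
  induction x using FreeAlgebra.induction with
  | grade0 r =>
      intro m
      rw [AlgHom.commutes, AlgHom.commutes]
      rw [Module.algebraMap_end_apply, map_smul, Algebra.smul_def, sub_self]
      exact Submodule.zero_mem _
  | grade1 g =>
      intro m
      induction m using Finsupp.induction_linear with
      | zero => simp only [map_zero, mul_zero, sub_zero]; exact Submodule.zero_mem _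
      | add f f' hf hf' =>
          rw [map_add, map_add, map_add, mul_add, add_sub_add_comm]
          exact Submodule.add_mem _ hf hf'
      | single p k =>
          obtain ⟨a, w⟩ := p
          have hg : φr K q b (mkD K q (FreeAlgebra.ι K g)) = Tg K q b g := by
            rw [show FreeAlgebra.ι K g = sg K g from rfl, φr_mk, Ff_sg]
          rw [hg]
          cases g with
          | X i =>
              rw [show mkD K q (FreeAlgebra.ι K (SGen.X i)) = Xe K q i from rfl]
              exact Qp_single_X K q b i a w k
          | Xinv i =>
              rw [show mkD K q (FreeAlgebra.ι K (SGen.Xinv i)) = XeInv K q i from rfl]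
              exact Qp_single_Xinv K q b i a w k
          | Y i =>
              rw [show mkD K q (FreeAlgebra.ι K (SGen.Y i)) = Ye K q i from rfl]
              exact Qp_single_Y K q b i a w k
          | Yinv i =>
              rw [show mkD K q (FreeAlgebra.ι K (SGen.Yinv i)) = YeInv K q i from rfl]
              exact Qp_single_Yinv K q b i a w k
          | S u =>
              rw [show mkD K q (FreeAlgebra.ι K (SGen.S u)) = Se K q u from rfl]
              exact Qp_single_S K q b u a w k
  | mul x y hx hy =>
      intro m
      rw [map_mul, map_mul, Module.End.mul_apply]
      have h1 := hx (φr K q b (mkD K q y) m)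
      have h2 : mkD K q x * (θ0 K q (φr K q b (mkD K q y) m) - mkD K q y * θ0 K q m)
          ∈ charIdeal K N q b := by
        rw [← smul_eq_mul]
        exact Submodule.smul_mem _ _ (hy m)
      have h3 := Submodule.add_mem _ h1 h2
      convert h3 using 1
      rw [mul_sub]
      noncomm_ring
  | add x y hx hy =>
      intro m
      rw [map_add, map_add, LinearMap.add_apply, map_add, add_mul, add_sub_add_comm]
      exact Submodule.add_mem _ (hx m) (hy m)

lemma Qp_e0 (d : SmashD K N q) :
    θ0 K q (ψm K q b d) - d ∈ charIdeal K N q b := by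
  have h := Qp_all K q b d (e0 K)
  rw [ψm_apply]
  have he0 : θ0 K q (e0 K (N := N)) = 1 := by
    rw [e0, θ0_single, mono]
    rw [show ((0 : Fin N → ℤ), (1 : Equiv.Perm (Fin N))).1 = (0 : Fin N → ℤ) from rfl]
    rw [Xm_zero]
    simp [rSone]
  rwa [he0, mul_one] at h

end Ideal

section Weight
variable {K : Type} [Field K] {N : ℕ} {q : Kˣ} {b : Fin N → Kˣ}

lemma q_zpow_eq_one (hq : ∀ m : ℕ, m ≠ 0 → (q : K) ^ m ≠ 1) {z : ℤ} (h : q ^ z = 1) :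
    z = 0 := by
  by_contra hz
  set n : ℕ := z.natAbs with hn
  have hn0 : n ≠ 0 := by simpa [hn] using hz
  have hqn : q ^ (n : ℤ) = 1 := by
    rcases Int.natAbs_eq z with he | he
    · rw [← he]; exact h
    · rw [show (n : ℤ) = -z by omega, zpow_neg, h, inv_one]
  have hK : (q : K) ^ n = 1 := by
    have h2 := congrArg (Units.val) hqn
    rw [zpow_natCast] at h2
    simpa [Units.val_pow_eq_pow_val] using h2
  exact hq n hn0 hK

lemma TY_coeff (i : Fin N) (m : MM K N) (p : PIdx N) :
    (TY K q b i m) p = (wt K q b p i : K) * m p := by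
  induction m using Finsupp.induction_linear with
  | zero => simp
  | add f g hf hg => rw [map_add, Finsupp.add_apply, hf, hg, Finsupp.add_apply, mul_add]
  | single r k =>
      rw [TY_single]
      by_cases hrp : r = p
      · subst hrp; simp [Finsupp.smul_apply]
      · simp [Finsupp.smul_apply, Finsupp.single_eq_of_ne' hrp]

lemma weight_mem (hq : ∀ m : ℕ, m ≠ 0 → (q : K) ^ m ≠ 1)
    (hb : ∀ i j : Fin N, b i ≠ b j → ∀ z : ℤ, b i / b j ≠ q ^ z)
    (m : MM K N) (hm : ∀ i, TY K q b i m = ((b i : K)) • m) :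
    ∀ p ∈ m.support, p.1 = 0 ∧ p.2 ∈ permStab K N b := by
  intro p hp
  have hmp : m p ≠ 0 := Finsupp.mem_support_iff.mp hp
  have hwt : ∀ i, wt K q b p i = b i := by
    intro i
    have h1 := congrArg (fun f : MM K N => f p) (hm i)
    simp only [TY_coeff, Finsupp.smul_apply, smul_eq_mul] at h1
    exact Units.ext (mul_right_cancel₀ hmp h1)
  have hbp : ∀ i, b (p.2⁻¹ i) = b i := by
    intro i
    by_contra hne
    apply hb i (p.2⁻¹ i) (fun h => hne h.symm) (p.1 i)
    have h2 := hwt i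
    rw [wt] at h2
    rw [div_eq_iff_eq_mul]
    exact h2.symm
  refine ⟨?_, ?_⟩
  · funext i
    have h2 := hwt i
    rw [wt, hbp i] at h2
    have h3 : q ^ (p.1 i) = 1 := by
      have := mul_right_cancel (a := q ^ (p.1 i)) (b := b i) (c := 1) (by rw [one_mul, h2])
      exact this
    exact q_zpow_eq_one hq h3
  · have hmem : p.2⁻¹ ∈ permStab K N b := hbp
    simpa using (permStab K N b).inv_mem hmem

end Weight

end S13

namespace S13

section Final
variable (K : Type) [Field K] {N : ℕ} (q : Kˣ) (b : Fin N → Kˣ)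

lemma stab_inv_apply (w : permStab K N b) (i : Fin N) :
    b ((w : Equiv.Perm (Fin N))⁻¹ i) = b i := by
  have h := w.2 ((w : Equiv.Perm (Fin N))⁻¹ i)
  rw [show (w : Equiv.Perm (Fin N)) ((w : Equiv.Perm (Fin N))⁻¹ i) = i from by simp] at h
  exact h.symm

/-- Right multiplication by `s_w` on the quotient module. -/
def Rw (w : permStab K N b) :
    Module.End (SmashD K N q) (SmashD K N q ⧸ charIdeal K N q b) :=
  Submodule.mapQ (charIdeal K N q b) (charIdeal K N q b)
    (LinearMap.toSpanSingleton (SmashD K N q) (SmashD K N q)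
      (Se K q (w : Equiv.Perm (Fin N))))
    (by
      intro x hx
      simp only [Submodule.mem_comap, LinearMap.toSpanSingleton_apply]
      induction hx using Submodule.span_induction with
      | mem y hy =>
          rcases hy with ⟨i, rfl⟩ | ⟨i, rfl⟩
          · have key : (Ye K q i - algebraMap K (SmashD K N q) (b i : K))
                • Se K q (w : Equiv.Perm (Fin N))
                = Se K q (w : Equiv.Perm (Fin N)) •
                  (Ye K q ((w : Equiv.Perm (Fin N))⁻¹ i)
                    - algebraMap K (SmashD K N q) (b ((w : Equiv.Perm (Fin N))⁻¹ i) : K)) := by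
              rw [smul_eq_mul, smul_eq_mul, mul_sub, sub_mul, yS, Algebra.commutes,
                stab_inv_apply K b w i]
            rw [key]
            exact Submodule.smul_mem _ _ (gen1_mem K q b _)
          · have key : (YeInv K q i - algebraMap K (SmashD K N q) (((b i)⁻¹ : Kˣ) : K))
                • Se K q (w : Equiv.Perm (Fin N))
                = Se K q (w : Equiv.Perm (Fin N)) •
                  (YeInv K q ((w : Equiv.Perm (Fin N))⁻¹ i)
                    - algebraMap K (SmashD K N q) (((b ((w : Equiv.Perm (Fin N))⁻¹ i))⁻¹ : Kˣ) : K)) := by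
              rw [smul_eq_mul, smul_eq_mul, mul_sub, sub_mul, yinvS, Algebra.commutes,
                stab_inv_apply K b w i]
            rw [key]
            exact Submodule.smul_mem _ _ (gen2_mem K q b _)
      | zero => simp only [zero_smul]; exact Submodule.zero_mem _
      | add y z _ _ ihy ihz => rw [add_smul]; exact Submodule.add_mem _ ihy ihz
      | smul c y _ ih =>
          rw [smul_eq_mul, smul_eq_mul, mul_assoc, ← smul_eq_mul (a := c)]
          exact Submodule.smul_mem _ _ ih)

lemma Rw_mk (w : permStab K N b) (d : SmashD K N q) :
    Rw K q b w (Submodule.Quotient.mk d)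
      = (Submodule.Quotient.mk (d * Se K q (w : Equiv.Perm (Fin N))) :
          SmashD K N q ⧸ charIdeal K N q b) := by
  rw [Rw, Submodule.mapQ_apply, LinearMap.toSpanSingleton_apply, smul_eq_mul]

lemma endo_ext {f g : Module.End (SmashD K N q) (SmashD K N q ⧸ charIdeal K N q b)}
    (h : f (Submodule.Quotient.mk 1) = g (Submodule.Quotient.mk 1)) : f = g := by
  apply LinearMap.ext
  intro x
  obtain ⟨d, rfl⟩ := Submodule.Quotient.mk_surjective _ x
  have hd : (Submodule.Quotient.mk d : SmashD K N q ⧸ charIdeal K N q b)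
      = d • Submodule.Quotient.mk (1 : SmashD K N q) := by
    rw [← Submodule.Quotient.mk_smul, smul_eq_mul, mul_one]
  rw [hd, map_smul, map_smul, h]

/-- The monoid homomorphism `w ↦ (right multiplication by s_w)ᵒᵖ`. -/
def Fmon : permStab K N b →*
    (Module.End (SmashD K N q) (SmashD K N q ⧸ charIdeal K N q b))ᵐᵒᵖ where
  toFun w := MulOpposite.op (Rw K q b w)
  map_one' := by
    have h1 : Rw K q b 1 = 1 := by
      apply endo_ext
      rw [Rw_mk, OneMemClass.coe_one, rSone, mul_one, Module.End.one_apply]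
    show MulOpposite.op (Rw K q b 1) = 1
    rw [h1]; rfl
  map_mul' w w' := by
    have h1 : Rw K q b (w * w') = Rw K q b w' * Rw K q b w := by
      apply endo_ext
      rw [Rw_mk, Module.End.mul_apply, Rw_mk, Rw_mk, Subgroup.coe_mul, ← rSmul, mul_assoc]
    show MulOpposite.op (Rw K q b (w * w'))
        = MulOpposite.op (Rw K q b w) * MulOpposite.op (Rw K q b w')
    rw [h1, ← MulOpposite.op_mul]

/-- The algebra homomorphism `K[W_J] → End_D(D/I)ᵒᵖ`. -/
def Gh : MonoidAlgebra K (permStab K N b) →ₐ[K]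
    (Module.End (SmashD K N q) (SmashD K N q ⧸ charIdeal K N q b))ᵐᵒᵖ :=
  MonoidAlgebra.lift K _ (permStab K N b) (Fmon K q b)

lemma Gh_unop (x : MonoidAlgebra K (permStab K N b)) :
    MulOpposite.unop (Gh K q b x) = x.coeff.sum fun w c => c • Rw K q b w := by
  rw [Gh, MonoidAlgebra.lift_apply]
  rw [Finsupp.sum, Finsupp.sum, Finset.unop_sum]
  apply Finset.sum_congr rfl
  intro w _
  rw [MulOpposite.unop_smul]
  rfl

lemma ψm_Se (w : Equiv.Perm (Fin N)) :
    ψm K q b (Se K q w)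
      = Finsupp.single (((0 : Fin N → ℤ), w) : PIdx N) (1 : K) := by
  rw [ψm_apply, φr_Se, e0, TS_single]
  have h : ((fun j => ((0 : Fin N → ℤ), (1 : Equiv.Perm (Fin N))).1 (w⁻¹ j),
      w * ((0 : Fin N → ℤ), (1 : Equiv.Perm (Fin N))).2) : PIdx N)
      = (((0 : Fin N → ℤ), w) : PIdx N) := by
    rw [Prod.mk.injEq]
    exact ⟨rfl, mul_one w⟩
  rw [h]

lemma Gh_inj : Function.Injective (Gh K q b) := by
  rw [injective_iff_map_eq_zero]
  intro x hx
  have h0 : MulOpposite.unop (Gh K q b x)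
      (Submodule.Quotient.mk (1 : SmashD K N q)) = 0 := by
    rw [hx]; rfl
  rw [Gh_unop] at h0
  have h1 : (x.coeff.sum fun w c => c • Rw K q b w)
      (Submodule.Quotient.mk (1 : SmashD K N q))
      = (Submodule.Quotient.mk (x.coeff.sum fun w c => c • Se K q (w : Equiv.Perm (Fin N))) :
          SmashD K N q ⧸ charIdeal K N q b) := by
    rw [Finsupp.sum, Finsupp.sum, LinearMap.sum_apply,
      show (Submodule.Quotient.mk
          (∑ w ∈ x.coeff.support, x.coeff w • Se K q (w : Equiv.Perm (Fin N))) :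
            SmashD K N q ⧸ charIdeal K N q b)
        = ∑ w ∈ x.coeff.support, (x.coeff w • Submodule.Quotient.mk (Se K q (w : Equiv.Perm (Fin N))) :
            SmashD K N q ⧸ charIdeal K N q b) by
      rw [← Submodule.mkQ_apply, map_sum]
      refine Finset.sum_congr rfl fun w _ => ?_
      rw [Submodule.mkQ_apply, Submodule.Quotient.mk_smul]]
    refine Finset.sum_congr rfl fun w _ => ?_
    rw [LinearMap.smul_apply, Rw_mk, one_mul]
  rw [h1] at h0
  have h2 : (x.coeff.sum fun w c => c • Se K q (w : Equiv.Perm (Fin N))) ∈ charIdeal K N q b :=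
    (Submodule.Quotient.mk_eq_zero _).mp h0
  have h3 := ψm_I K q b h2
  have h4 : ψm K q b (x.coeff.sum fun w c => c • Se K q (w : Equiv.Perm (Fin N)))
      = Finsupp.mapDomain
          (fun w : permStab K N b => (((0 : Fin N → ℤ), (w : Equiv.Perm (Fin N))) : PIdx N))
          x.coeff := by
    rw [map_finsuppSum, Finsupp.mapDomain]
    apply Finsupp.sum_congr
    intro w _
    rw [map_smul, ψm_Se, Finsupp.smul_single, smul_eq_mul, mul_one]
  rw [h4] at h3
  have hembinj : Function.Injective
      (fun w : permStab K N b => (((0 : Fin N → ℤ), (w : Equiv.Perm (Fin N))) : PIdx N)) :=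
    fun w w' h => Subtype.ext (congrArg Prod.snd h)
  apply MonoidAlgebra.coeff_injective
  apply Finsupp.mapDomain_injective hembinj
  rw [h3, MonoidAlgebra.coeff_zero, Finsupp.mapDomain_zero]

lemma Gh_surj (hq : ∀ m : ℕ, m ≠ 0 → (q : K) ^ m ≠ 1)
    (hb : ∀ i j : Fin N, b i ≠ b j → ∀ z : ℤ, b i / b j ≠ q ^ z) :
    Function.Surjective (Gh K q b) := by
  intro F
  set f := MulOpposite.unop F with hf
  obtain ⟨d, hd⟩ := Submodule.Quotient.mk_surjective _
    (f (Submodule.Quotient.mk (1 : SmashD K N q)))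
  have fK : ∀ (k : K) (x : SmashD K N q ⧸ charIdeal K N q b), f (k • x) = k • f x := by
    intro k x
    rw [← algebraMap_smul (SmashD K N q) k x, map_smul, algebraMap_smul]
  have hkey : ∀ i, Ye K q i * d - (b i : K) • d ∈ charIdeal K N q b := by
    intro i
    rw [← Submodule.Quotient.eq]
    calc (Submodule.Quotient.mk (Ye K q i * d) : SmashD K N q ⧸ charIdeal K N q b)
        = Ye K q i • Submodule.Quotient.mk d := by
          rw [← Submodule.Quotient.mk_smul, smul_eq_mul]
      _ = Ye K q i • f (Submodule.Quotient.mk 1) := by rw [hd]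
      _ = f (Ye K q i • Submodule.Quotient.mk (1 : SmashD K N q)) := (map_smul f _ _).symm
      _ = f ((b i : K) • Submodule.Quotient.mk (1 : SmashD K N q)) := by
          congr 1
          rw [← Submodule.Quotient.mk_smul, smul_eq_mul, mul_one, ← Submodule.Quotient.mk_smul]
          rw [Submodule.Quotient.eq]
          have := gen1_mem K q b i
          rwa [show algebraMap K (SmashD K N q) (b i : K) = (b i : K) • (1 : SmashD K N q) by
            rw [Algebra.smul_def, mul_one]] at this
      _ = (b i : K) • f (Submodule.Quotient.mk 1) := fK _ _
      _ = (b i : K) • Submodule.Quotient.mk d := by rw [hd]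
      _ = Submodule.Quotient.mk ((b i : K) • d) := (Submodule.Quotient.mk_smul _ _ _).symm
  have hm : ∀ i, TY K q b i (ψm K q b d) = (b i : K) • ψm K q b d := by
    intro i
    have h0 := ψm_I K q b (hkey i)
    rw [map_sub, map_smul, sub_eq_zero] at h0
    have h1 : ψm K q b (Ye K q i * d) = TY K q b i (ψm K q b d) := by
      rw [ψm_apply, map_mul, Module.End.mul_apply, φr_Ye, ψm_apply]
    rw [h1] at h0
    exact h0
  have hsupp := weight_mem hq hb (ψm K q b d) hm
  set m := ψm K q b d with hmdef
  set emb : permStab K N b → PIdx N :=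
    fun w => (((0 : Fin N → ℤ), (w : Equiv.Perm (Fin N))) : PIdx N) with hembdef
  have hinj : Set.InjOn emb (emb ⁻¹' ↑m.support) :=
    fun w _ w' _ h => Subtype.ext (congrArg Prod.snd h)
  have hbij : Set.BijOn emb (emb ⁻¹' ↑m.support) ↑m.support := by
    refine ⟨fun w hw => hw, hinj, fun p hp => ?_⟩
    obtain ⟨h1, h2⟩ := hsupp p hp
    refine ⟨⟨p.2, h2⟩, ?_, ?_⟩
    · show emb ⟨p.2, h2⟩ ∈ ↑m.support
      have : emb ⟨p.2, h2⟩ = p := by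
        rw [hembdef]
        exact Prod.ext h1.symm rfl
      rwa [this]
    · rw [hembdef]
      exact Prod.ext h1.symm rfl
  set x := MonoidAlgebra.ofCoeff (Finsupp.comapDomain emb m hinj) with hx
  refine ⟨x, ?_⟩
  have hGx : MulOpposite.unop (Gh K q b x)
      (Submodule.Quotient.mk (1 : SmashD K N q)) = f (Submodule.Quotient.mk 1) := by
    rw [Gh_unop]
    have hL : (x.coeff.sum fun w c => c • Rw K q b w)
        (Submodule.Quotient.mk (1 : SmashD K N q))
        = x.coeff.sum fun w c => c • (Submodule.Quotient.mk (Se K q (w : Equiv.Perm (Fin N))) :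
            SmashD K N q ⧸ charIdeal K N q b) := by
      rw [Finsupp.sum, Finsupp.sum, LinearMap.sum_apply]
      refine Finset.sum_congr rfl fun w _ => ?_
      rw [LinearMap.smul_apply, Rw_mk, one_mul]
    have hR : f (Submodule.Quotient.mk 1)
        = m.sum fun p c => c • (Submodule.Quotient.mk (Se K q p.2) :
            SmashD K N q ⧸ charIdeal K N q b) := by
      rw [← hd]
      have hdm : (Submodule.Quotient.mk d : SmashD K N q ⧸ charIdeal K N q b)
          = Submodule.Quotient.mk (θ0 K q m) := by
        rw [Submodule.Quotient.eq]
        have h := Qp_e0 K q b d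
        have h2 : d - θ0 K q m = -(θ0 K q (ψm K q b d) - d) := by
          rw [← hmdef]; abel
        rw [h2]
        exact Submodule.neg_mem _ h
      rw [hdm]
      have hθ : θ0 K q m = m.sum fun p c => c • mono K q p := by
        rw [θ0, Finsupp.lsum_apply]
        apply Finsupp.sum_congr
        intro p _
        rw [LinearMap.toSpanSingleton_apply]
      rw [hθ, Finsupp.sum, Finsupp.sum]
      rw [show (Submodule.Quotient.mk (∑ p ∈ m.support, m p • mono K q p) :
            SmashD K N q ⧸ charIdeal K N q b)
          = ∑ p ∈ m.support, (m p • Submodule.Quotient.mk (mono K q p) :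
            SmashD K N q ⧸ charIdeal K N q b) by
        rw [← Submodule.mkQ_apply, map_sum]
        refine Finset.sum_congr rfl fun p _ => ?_
        rw [Submodule.mkQ_apply, Submodule.Quotient.mk_smul]]
      refine Finset.sum_congr rfl fun p hp => ?_
      obtain ⟨h1, _⟩ := hsupp p hp
      have hmono : mono K q p = Se K q p.2 := by
        rw [mono, h1, Xm_zero, Units.val_one, one_mul]
      rw [hmono]
    rw [hL, hR]
    exact Finsupp.sum_comapDomain emb m
      (fun p c => c • (Submodule.Quotient.mk (Se K q p.2) :
        SmashD K N q ⧸ charIdeal K N q b)) hbij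
  have hfin : MulOpposite.unop (Gh K q b x) = f := endo_ext K q b hGx
  exact MulOpposite.unop_injective hfin

end Final

end S13

theorem statement13 (K : Type) [Field K] [CharZero K] (N : ℕ) (hN : 1 ≤ N)
    (q : Kˣ) (hq : ∀ m : ℕ, m ≠ 0 → (q : K) ^ m ≠ 1)
    (b : Fin N → Kˣ)
    (hb : ∀ i j : Fin N, b i ≠ b j → ∀ z : ℤ, b i / b j ≠ q ^ z) :
    Nonempty
      (Module.End (SmashD K N q) (SmashD K N q ⧸ charIdeal K N q b) ≃ₐ[K]
        (MonoidAlgebra K ↥(permStab K N b))ᵐᵒᵖ) := by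
  have hGbij : Function.Bijective (S13.Gh K q b) :=
    ⟨S13.Gh_inj K q b, S13.Gh_surj K q b hq hb⟩
  let e := AlgEquiv.ofBijective (S13.Gh K q b) hGbij
  exact ⟨(AlgEquiv.opOp K
      (Module.End (SmashD K N q) (SmashD K N q ⧸ charIdeal K N q b))).trans
    (AlgEquiv.op e.symm)⟩

end
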